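/- For every real α one has ∫₀¹ |g(α,β;X)|⁴ dβ ≪ Σ_{1≤u₁,u₂≤2X} min{X, ‖6α u₁u₂‖^{−1}}, with an absolute implicit constant; here the sum is over integer pairs (u₁,u₂). -/

import Mathlib

open MeasureTheory

/-- `e(z) = e^{2πiz}`. -/
noncomputable def e (z : ℝ) : ℂ := Complex.exp (2 * Real.pi * Complex.I * z)

/-- `g(α,β;X) = Σ_{1 ≤ x ≤ X} e(αx³ + βx)`. -/
noncomputable def g (α β X : ℝ) : ℂ :=
  ∑ x ∈ Finset.Icc 1 ⌊X⌋₊, e (α * (x : ℝ) ^ 3 + β * (x : ℝ))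

/-- The major arcs `𝔐(Q)` (relative to the parameter `X`). -/
def majorArcs (X Q : ℝ) : Set ℝ :=
  {α | α ∈ Set.Ico (0 : ℝ) 1 ∧ ∃ q : ℕ, ∃ a : ℤ, 0 < q ∧ 0 ≤ a ∧ (a : ℝ) ≤ (q : ℝ) ∧
    (q : ℝ) ≤ Q ∧ Int.gcd a (q : ℤ) = 1 ∧ |(q : ℝ) * α - (a : ℝ)| ≤ Q * X ^ (-3 : ℝ)}

/-- The minor arcs `𝔪(Q) = [0,1) \ 𝔐(Q)`. -/
def minorArcs (X Q : ℝ) : Set ℝ := Set.Ico (0 : ℝ) 1 \ majorArcs X Q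


/-- The distance from a real number to the nearest integer. -/
noncomputable def distNearestInt (t : ℝ) : ℝ := |t - (round t : ℝ)|

/-- min {X, ‖t‖⁻¹}, with the convention that this is X when ‖t‖ = 0. -/
noncomputable def minKernel (X t : ℝ) : ℝ :=
  if distNearestInt t = 0 then X else min X (distNearestInt t)⁻¹


lemma e_add (s t : ℝ) : e (s + t) = e s * e t := by
  simp [e, mul_add, Complex.exp_add]

lemma e_norm (t : ℝ) : ‖e t‖ = 1 := by
  have : (2 * Real.pi * Complex.I * t) = (2 * Real.pi * t : ℝ) * Complex.I := by
    push_cast; ring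
  rw [e, this, Complex.norm_exp_ofReal_mul_I]

lemma e_conj (t : ℝ) : starRingEnd ℂ (e t) = e (-t) := by
  rw [e, e, ← Complex.exp_conj]
  congr 1
  rw [show ((2:ℂ) * Real.pi * Complex.I * t) = (2 * Real.pi * t : ℝ) * Complex.I by push_cast; ring,
     show ((2:ℂ) * Real.pi * Complex.I * (-t:ℝ)) = -((2 * Real.pi * t : ℝ) * Complex.I) by push_cast; ring]
  rw [map_mul, Complex.conj_I, Complex.conj_ofReal]
  ring

lemma e_int (n : ℤ) : e n = 1 := by
  rw [e]
  have := Complex.exp_int_mul_two_pi_mul_I n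
  rw [← this]
  congr 1
  push_cast
  ring

lemma e_cont : Continuous e := by
  unfold e; fun_prop

lemma e_orth (m : ℤ) : (∫ β in (0:ℝ)..1, e (β * m)) = if m = 0 then 1 else 0 := by
  by_cases hm : m = 0
  · simp [hm, e]
  · have hc : (2 * Real.pi * Complex.I * m) ≠ 0 := by
      have h1 : (m:ℂ) ≠ 0 := Int.cast_ne_zero.mpr hm
      have h2 : (Real.pi:ℂ) ≠ 0 := Complex.ofReal_ne_zero.mpr Real.pi_ne_zero
      exact mul_ne_zero (mul_ne_zero (mul_ne_zero two_ne_zero h2) Complex.I_ne_zero) h1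
    have : ∀ β : ℝ, e (β * m) = Complex.exp ((2 * Real.pi * Complex.I * m) * β) := by
      intro β; rw [e]; congr 1; push_cast; ring
    simp only [this]
    rw [integral_exp_mul_complex hc]
    have h1 : Complex.exp (2 * Real.pi * Complex.I * m * (1:ℝ)) = 1 := by
      rw [show (2 * Real.pi * Complex.I * m * (1:ℝ) : ℂ) = m * (2 * Real.pi * Complex.I) by push_cast; ring]
      exact Complex.exp_int_mul_two_pi_mul_I m
    rw [h1]
    simp [hm]



lemma dni_nonneg (t : ℝ) : 0 ≤ distNearestInt t := abs_nonneg _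
lemma dni_le_half (t : ℝ) : distNearestInt t ≤ 1/2 := abs_sub_round t

lemma dni_min (t : ℝ) (n : ℤ) : distNearestInt t ≤ |t - n| := by
  by_cases h : n = round t
  · simp [h, distNearestInt]
  · have h1 : (1:ℝ) ≤ |(n:ℝ) - round t| := by
      rw [← Int.cast_sub, ← Int.cast_abs]
      exact_mod_cast Int.one_le_abs (sub_ne_zero.mpr (by exact_mod_cast h))
    have h2 : |(n:ℝ) - round t| ≤ |t - n| + |t - round t| := by
      have := abs_sub_abs_le_abs_sub ((n:ℝ) - t) ((round t : ℝ) - t)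
      calc |(n:ℝ) - round t| = |((n:ℝ) - t) - ((round t:ℝ) - t)| := by ring_nf
        _ ≤ |(n:ℝ) - t| + |(round t:ℝ) - t| := abs_sub _ _
        _ = |t - n| + |t - round t| := by rw [abs_sub_comm ((n:ℝ)) t, abs_sub_comm ((round t:ℝ)) t]
    have := dni_le_half t
    unfold distNearestInt at *
    linarith
lemma dni_neg (t : ℝ) : distNearestInt (-t) = distNearestInt t := by
  apply le_antisymm
  · calc distNearestInt (-t) ≤ |(-t) - (-(round t):ℤ)| := dni_min _ _
      _ = distNearestInt t := by unfold distNearestInt; push_cast; rw [← abs_neg]; ring_nf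
  · calc distNearestInt t ≤ |t - (-(round (-t)):ℤ)| := dni_min _ _
      _ = distNearestInt (-t) := by unfold distNearestInt; push_cast; rw [← abs_neg]; ring_nf

lemma e_sub_one_norm (θ : ℝ) (d := distNearestInt θ) :
    2 * distNearestInt θ ≤ ‖e θ - 1‖ := by
  set t0 : ℝ := θ - round θ with ht0
  have hper : e θ = e t0 := by
    have : θ = t0 + (round θ : ℝ) := by ring
    rw [this, e_add, e_int, mul_one]
  have habs : distNearestInt θ = |t0| := rfl
  have hhalf : |t0| ≤ 1/2 := abs_sub_round θ
  have hform : e t0 = Complex.exp ((2 * Real.pi * t0 : ℝ) * Complex.I) := by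
    unfold e; congr 1; push_cast; ring
  rw [hper, habs, hform]
  have hre : (Complex.exp ((2 * Real.pi * t0 : ℝ) * Complex.I)).re = Real.cos (2 * Real.pi * t0) :=
    Complex.exp_ofReal_mul_I_re _
  have him : (Complex.exp ((2 * Real.pi * t0 : ℝ) * Complex.I)).im = Real.sin (2 * Real.pi * t0) :=
    Complex.exp_ofReal_mul_I_im _
  set z := Complex.exp ((2 * Real.pi * t0 : ℝ) * Complex.I)
  have hpi := Real.pi_gt_three
  by_cases hc : |t0| ≤ 1/4
  · -- use imaginary part
    have h1 : |Real.sin (2 * Real.pi * t0)| = Real.sin (2 * Real.pi * |t0|) := by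
      rcases abs_cases t0 with ⟨h, h'⟩ | ⟨h, h'⟩
      · rw [h, abs_of_nonneg]
        apply Real.sin_nonneg_of_nonneg_of_le_pi
        · positivity
        · nlinarith
      · rw [h, show 2 * Real.pi * -t0 = -(2 * Real.pi * t0) by ring, Real.sin_neg]
        rw [abs_of_nonpos]
        apply Real.sin_nonpos_of_nonpos_of_neg_pi_le <;> nlinarith
    have h2 : 2 / Real.pi * (2 * Real.pi * |t0|) ≤ Real.sin (2 * Real.pi * |t0|) := by
      apply Real.mul_le_sin
      · positivity
      · nlinarith
    have h3 : 2 / Real.pi * (2 * Real.pi * |t0|) = 4 * |t0| := by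
      field_simp; ring
    have h4 : |(z - 1).im| ≤ ‖z - 1‖ := Complex.abs_im_le_norm _
    have h5 : (z - 1).im = Real.sin (2 * Real.pi * t0) := by simp [Complex.sub_im, him]
    rw [h5] at h4
    rw [h1] at h4
    nlinarith [abs_nonneg t0]
  · -- use real part
    push_neg at hc
    have h1 : Real.cos (2 * Real.pi * t0) ≤ 0 := by
      rw [← Real.cos_abs (2 * Real.pi * t0), abs_mul, abs_of_nonneg (by positivity : (0:ℝ) ≤ 2 * Real.pi)]
      apply Real.cos_nonpos_of_pi_div_two_le_of_le <;> nlinarith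
    have h4 : |(z - 1).re| ≤ ‖z - 1‖ := Complex.abs_re_le_norm _
    have h5 : (z - 1).re = Real.cos (2 * Real.pi * t0) - 1 := by simp [Complex.sub_re, hre]
    rw [h5] at h4
    rw [abs_of_nonpos (by linarith)] at h4
    nlinarith

lemma geom_bound (θ c : ℝ) (a b : ℕ) (hd : distNearestInt θ ≠ 0) :
    ‖∑ x ∈ Finset.Icc a b, e (θ * x + c)‖ ≤ (distNearestInt θ)⁻¹ := by
  have hdpos : 0 < distNearestInt θ := lt_of_le_of_ne (dni_nonneg θ) (Ne.symm hd)
  set z : ℂ := e θ with hz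
  have hzx : ∀ x : ℕ, e (θ * x + c) = e c * z ^ x := by
    intro x
    rw [show θ * x + c = c + θ * x by ring, e_add]
    congr 1
    rw [hz]
    unfold e
    rw [show (2 * (Real.pi:ℂ) * Complex.I * ((θ * x : ℝ):ℂ)) = (x:ℕ) * (2 * (Real.pi:ℂ) * Complex.I * (θ:ℝ)) by push_cast; ring,
       Complex.exp_nat_mul]
  have hz1 : z ≠ 1 := by
    intro h
    have := e_sub_one_norm θ
    rw [← hz, h] at this
    simp at this
    linarith
  simp only [hzx]
  rw [← Finset.mul_sum]
  rw [norm_mul, e_norm, one_mul]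
  rw [show Finset.Icc a b = Finset.Ico a (b+1) by rw [Finset.Ico_add_one_right_eq_Icc]]
  by_cases hab : a ≤ b + 1
  · rw [geom_sum_Ico hz1 hab]
    rw [norm_div]
    have hnum : ‖z ^ (b+1) - z ^ a‖ ≤ 2 := by
      calc ‖z ^ (b+1) - z ^ a‖ ≤ ‖z ^ (b+1)‖ + ‖z ^ a‖ := norm_sub_le _ _
        _ = 2 := by rw [norm_pow, norm_pow, e_norm]; norm_num
    have hden : 2 * distNearestInt θ ≤ ‖z - 1‖ := e_sub_one_norm θ
    have hdenpos : 0 < ‖z - 1‖ := by linarith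
    rw [div_le_iff₀ hdenpos]
    calc ‖z ^ (b+1) - z ^ a‖ ≤ 2 := hnum
      _ = (distNearestInt θ)⁻¹ * (2 * distNearestInt θ) := by field_simp
      _ ≤ (distNearestInt θ)⁻¹ * ‖z - 1‖ := by
          apply mul_le_mul_of_nonneg_left hden (by positivity)
  · rw [Finset.Ico_eq_empty (by omega)]
    simp [inv_nonneg, dni_nonneg θ]

lemma geom_min (θ c X : ℝ) (a b : ℕ) (hX : 1 ≤ X)
    (hcard : ((Finset.Icc a b).card : ℝ) ≤ X) :
    ‖∑ x ∈ Finset.Icc a b, e (θ * x + c)‖ ≤ minKernel X θ := by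
  have htriv : ‖∑ x ∈ Finset.Icc a b, e (θ * x + c)‖ ≤ X := by
    calc ‖∑ x ∈ Finset.Icc a b, e (θ * x + c)‖
        ≤ ∑ x ∈ Finset.Icc a b, ‖e (θ * x + c)‖ := norm_sum_le _ _
      _ = ((Finset.Icc a b).card : ℝ) := by
          rw [Finset.sum_congr rfl (fun x _ => e_norm _)]; simp
      _ ≤ X := hcard
  unfold minKernel
  by_cases hd : distNearestInt θ = 0
  · simpa [hd] using htriv
  · rw [if_neg hd]
    exact le_min htriv (geom_bound θ c a b hd)


lemma sum_mul4 (f1 f2 f3 f4 : ℕ → ℂ) (I : Finset ℕ) :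
  (∑ a ∈ I, f1 a) * (∑ b ∈ I, f2 b) * (∑ c ∈ I, f3 c) * (∑ d ∈ I, f4 d)
  = ∑ x ∈ I ×ˢ I ×ˢ I ×ˢ I, f1 x.1 * f2 x.2.1 * f3 x.2.2.1 * f4 x.2.2.2 := by
  simp only [Finset.sum_product, ← Finset.sum_mul, ← Finset.mul_sum]

lemma norm_pow_four (z : ℂ) : ((‖z‖^4 : ℝ) : ℂ) = z * z * (starRingEnd ℂ z) * (starRingEnd ℂ z) := by
  have h : z * z * (starRingEnd ℂ z) * (starRingEnd ℂ z) = (z * starRingEnd ℂ z)^2 := by ring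
  rw [h, Complex.mul_conj]
  rw [Complex.normSq_eq_norm_sq]
  push_cast
  ring

noncomputable def term (α : ℝ) (x : ℕ×ℕ×ℕ×ℕ) : ℂ :=
  if (x.1:ℤ) + x.2.1 = x.2.2.1 + x.2.2.2 then
    e (α * ((x.1:ℝ)^3 + (x.2.1:ℝ)^3 - (x.2.2.1:ℝ)^3 - (x.2.2.2:ℝ)^3)) else 0

lemma step1 (α X : ℝ) :
    (↑(∫ β in (0:ℝ)..1, ‖g α β X‖^4) : ℂ)
     = ∑ x ∈ (Finset.Icc 1 ⌊X⌋₊ ×ˢ Finset.Icc 1 ⌊X⌋₊ ×ˢ Finset.Icc 1 ⌊X⌋₊ ×ˢ Finset.Icc 1 ⌊X⌋₊),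
        term α x := by
  set N := ⌊X⌋₊
  set I := Finset.Icc 1 N
  -- pointwise expansion of the integrand
  have hpt : ∀ β : ℝ, ((‖g α β X‖^4 : ℝ) : ℂ)
      = ∑ x ∈ (I ×ˢ I ×ˢ I ×ˢ I),
          e (α * ((x.1:ℝ)^3 + (x.2.1:ℝ)^3 - (x.2.2.1:ℝ)^3 - (x.2.2.2:ℝ)^3))
            * e (β * ((x.1:ℝ) + (x.2.1:ℝ) - (x.2.2.1:ℝ) - (x.2.2.2:ℝ))) := by
    intro β
    rw [norm_pow_four]
    have hg : g α β X = ∑ x ∈ I, e (α * (x:ℝ)^3 + β * (x:ℝ)) := rfl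
    have hgc : starRingEnd ℂ (g α β X) = ∑ x ∈ I, e (-(α * (x:ℝ)^3 + β * (x:ℝ))) := by
      rw [hg, map_sum]
      exact Finset.sum_congr rfl fun x _ => e_conj _
    rw [hgc, hg, sum_mul4]
    refine Finset.sum_congr rfl fun x hx => ?_
    obtain ⟨x₁, x₂, x₃, x₄⟩ := x
    dsimp only
    rw [← e_add, ← e_add, ← e_add, ← e_add]
    congr 1
    ring
  have hInt : ∀ x : ℕ×ℕ×ℕ×ℕ, IntervalIntegrable (fun β =>
      e (α * ((x.1:ℝ)^3 + (x.2.1:ℝ)^3 - (x.2.2.1:ℝ)^3 - (x.2.2.2:ℝ)^3))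
        * e (β * ((x.1:ℝ) + (x.2.1:ℝ) - (x.2.2.1:ℝ) - (x.2.2.2:ℝ)))) volume 0 1 := by
    intro x
    apply Continuous.intervalIntegrable
    exact continuous_const.mul (e_cont.comp (by fun_prop))
  rw [← intervalIntegral.integral_ofReal]
  rw [intervalIntegral.integral_congr (fun β _ => hpt β)]
  rw [intervalIntegral.integral_finset_sum (fun x _ => hInt x)]
  refine Finset.sum_congr rfl fun x hx => ?_
  rw [intervalIntegral.integral_const_mul]
  have hm : ((x.1:ℝ) + (x.2.1:ℝ) - (x.2.2.1:ℝ) - (x.2.2.2:ℝ))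
      = (((x.1:ℤ) + x.2.1 - x.2.2.1 - x.2.2.2 : ℤ) : ℝ) := by push_cast; ring
  simp only [hm]
  rw [e_orth]
  rw [term]
  by_cases h : (x.1:ℤ) + x.2.1 = x.2.2.1 + x.2.2.2
  · rw [if_pos h, if_pos (by omega), mul_one]
  · rw [if_neg h, if_neg (by omega), mul_zero]




def phi (x : ℕ×ℕ×ℕ×ℕ) : ℤ×ℤ := ((x.1:ℤ) - x.2.2.1, (x.1:ℤ) - x.2.2.2)

lemma fiber_bound (α X : ℝ) (hX : 1 ≤ X) (u₁ u₂ : ℤ) :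
    ‖∑ x ∈ (((Finset.Icc 1 ⌊X⌋₊ ×ˢ Finset.Icc 1 ⌊X⌋₊ ×ˢ Finset.Icc 1 ⌊X⌋₊ ×ˢ Finset.Icc 1 ⌊X⌋₊)).filter
        (fun x => phi x = (u₁, u₂))), term α x‖
      ≤ minKernel X (6 * α * (u₁:ℝ) * (u₂:ℝ)) := by
  classical
  set N := ⌊X⌋₊ with hN
  have hNX : (N:ℝ) ≤ X := Nat.floor_le (by linarith)
  set aI : ℤ := max 1 (max (1+u₁) (max (1+u₂) (1+u₁+u₂))) with haI
  set bI : ℤ := min (N:ℤ) (min ((N:ℤ)+u₁) (min ((N:ℤ)+u₂) ((N:ℤ)+u₁+u₂))) with hbI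
  set a : ℕ := aI.toNat with ha
  set b : ℕ := bI.toNat with hb
  -- the inner sum equals a geometric-type sum over Icc a b
  have key : ∑ x ∈ (((Finset.Icc 1 N ×ˢ Finset.Icc 1 N ×ˢ Finset.Icc 1 N ×ˢ Finset.Icc 1 N)).filter
        (fun x => phi x = (u₁, u₂))), term α x
      = ∑ x₁ ∈ Finset.Icc a b,
          e ((6 * α * (u₁:ℝ) * (u₂:ℝ)) * (x₁:ℝ) + (-3 * α * (u₁:ℝ) * (u₂:ℝ) * ((u₁:ℝ)+(u₂:ℝ)))) := by
    rw [Finset.sum_filter]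
    have : ∀ x ∈ (Finset.Icc 1 N ×ˢ Finset.Icc 1 N ×ˢ Finset.Icc 1 N ×ˢ Finset.Icc 1 N),
        (if phi x = (u₁, u₂) then term α x else 0)
        = (if phi x = (u₁, u₂) ∧ (x.1:ℤ) + x.2.1 = x.2.2.1 + x.2.2.2 then
            e (α * ((x.1:ℝ)^3 + (x.2.1:ℝ)^3 - (x.2.2.1:ℝ)^3 - (x.2.2.2:ℝ)^3)) else 0) := by
      intro x _
      unfold term
      by_cases h1 : phi x = (u₁, u₂) <;> by_cases h2 : (x.1:ℤ) + x.2.1 = x.2.2.1 + x.2.2.2 <;>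
        simp [h1, h2]
    rw [Finset.sum_congr rfl this, ← Finset.sum_filter]
    refine Finset.sum_nbij' (fun x => x.1)
      (fun x₁ => (x₁, ((x₁:ℤ) - u₁ - u₂).toNat, ((x₁:ℤ) - u₁).toNat, ((x₁:ℤ) - u₂).toNat))
      ?_ ?_ ?_ ?_ ?_
    · rintro ⟨x₁, x₂, x₃, x₄⟩ hx
      simp only [Finset.mem_filter, Finset.mem_product, Finset.mem_Icc, phi, Prod.mk.injEq] at hx
      simp only [Finset.mem_Icc, ha, hb, haI, hbI]
      omega
    · intro x₁ hx₁
      simp only [Finset.mem_Icc, ha, hb, haI, hbI] at hx₁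
      simp only [Finset.mem_filter, Finset.mem_product, Finset.mem_Icc, phi, Prod.mk.injEq]
      omega
    · rintro ⟨x₁, x₂, x₃, x₄⟩ hx
      simp only [Finset.mem_filter, Finset.mem_product, Finset.mem_Icc, phi, Prod.mk.injEq] at hx
      simp only [Prod.mk.injEq]
      refine ⟨trivial, ?_, ?_, ?_⟩ <;> omega
    · intro x₁ hx₁
      rfl
    · rintro ⟨x₁, x₂, x₃, x₄⟩ hx
      simp only [Finset.mem_filter, Finset.mem_product, Finset.mem_Icc, phi, Prod.mk.injEq] at hx
      obtain ⟨⟨⟨hx1a, hx1b⟩, ⟨hx2a, hx2b⟩, ⟨hx3a, hx3b⟩, hx4a, hx4b⟩, ⟨hu1, hu2⟩, hcond⟩ := hx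
      have e2 : (x₂:ℝ) = (x₁:ℝ) - u₁ - u₂ := by exact_mod_cast congrArg (Int.cast : ℤ → ℝ) (show (x₂:ℤ) = (x₁:ℤ) - u₁ - u₂ by omega)
      have e3 : (x₃:ℝ) = (x₁:ℝ) - u₁ := by exact_mod_cast congrArg (Int.cast : ℤ → ℝ) (show (x₃:ℤ) = (x₁:ℤ) - u₁ by omega)
      have e4 : (x₄:ℝ) = (x₁:ℝ) - u₂ := by exact_mod_cast congrArg (Int.cast : ℤ → ℝ) (show (x₄:ℤ) = (x₁:ℤ) - u₂ by omega)
      congr 1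
      dsimp only
      rw [e2, e3, e4]
      ring
  rw [key]
  apply geom_min _ _ _ _ _ hX
  calc ((Finset.Icc a b).card : ℝ) ≤ ((Finset.Icc 1 N).card : ℝ) := by
        have hsub : Finset.Icc a b ⊆ Finset.Icc 1 N := by
          apply Finset.Icc_subset_Icc <;> omega
        exact_mod_cast Finset.card_le_card hsub
    _ ≤ X := by simpa using hNX


lemma minKernel_neg (X t : ℝ) : minKernel X (-t) = minKernel X t := by
  unfold minKernel; rw [dni_neg]

lemma minKernel_le (X t : ℝ) : minKernel X t ≤ X := by
  unfold minKernel; split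
  · exact le_rfl
  · exact min_le_left _ _

lemma minKernel_one_le (X t : ℝ) (hX : 1 ≤ X) : 1 ≤ minKernel X t := by
  unfold minKernel; split
  · exact hX
  · refine le_min hX ?_
    have h1 : 0 < distNearestInt t := lt_of_le_of_ne (dni_nonneg t) (Ne.symm (by assumption))
    have h2 := dni_le_half t
    rw [le_inv_comm₀ one_pos h1]
    linarith

lemma minKernel_nonneg (X t : ℝ) (hX : 0 ≤ X) : 0 ≤ minKernel X t := by
  unfold minKernel; split
  · exact hX
  · exact le_min hX (inv_nonneg.mpr (dni_nonneg t))

lemma minKernel_eq_of_abs (X s t : ℝ) (h : s = t ∨ s = -t) : minKernel X s = minKernel X t := by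
  rcases h with h | h
  · rw [h]
  · rw [h, minKernel_neg]

lemma minKernel_int_abs (X α : ℝ) (u₁ u₂ : ℤ) :
    minKernel X (6*α*(u₁:ℝ)*(u₂:ℝ)) = minKernel X (6*α*(u₁.natAbs:ℝ)*(u₂.natAbs:ℝ)) := by
  rcases Int.natAbs_eq u₁ with h1|h1 <;> rcases Int.natAbs_eq u₂ with h2|h2 <;>
    [ (have hr1 : (u₁:ℝ) = (u₁.natAbs:ℝ) := by rw [Nat.cast_natAbs]; exact_mod_cast h1);
      (have hr1 : (u₁:ℝ) = (u₁.natAbs:ℝ) := by rw [Nat.cast_natAbs]; exact_mod_cast h1);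
      (have hr1 : (u₁:ℝ) = -(u₁.natAbs:ℝ) := by rw [Nat.cast_natAbs]; exact_mod_cast h1);
      (have hr1 : (u₁:ℝ) = -(u₁.natAbs:ℝ) := by rw [Nat.cast_natAbs]; exact_mod_cast h1)] <;>
    [ (have hr2 : (u₂:ℝ) = (u₂.natAbs:ℝ) := by rw [Nat.cast_natAbs]; exact_mod_cast h2);
      (have hr2 : (u₂:ℝ) = -(u₂.natAbs:ℝ) := by rw [Nat.cast_natAbs]; exact_mod_cast h2);
      (have hr2 : (u₂:ℝ) = (u₂.natAbs:ℝ) := by rw [Nat.cast_natAbs]; exact_mod_cast h2);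
      (have hr2 : (u₂:ℝ) = -(u₂.natAbs:ℝ) := by rw [Nat.cast_natAbs]; exact_mod_cast h2)]
  · exact minKernel_eq_of_abs _ _ _ (Or.inl (by rw [hr1, hr2]))
  · exact minKernel_eq_of_abs _ _ _ (Or.inr (by rw [hr1, hr2]; ring))
  · exact minKernel_eq_of_abs _ _ _ (Or.inr (by rw [hr1, hr2]; ring))
  · exact minKernel_eq_of_abs _ _ _ (Or.inl (by rw [hr1, hr2]; ring))

lemma counting (α X : ℝ) (hX : 1 ≤ X) :
    ∑ u ∈ (Finset.Icc (1-(⌊X⌋₊:ℤ)) ((⌊X⌋₊:ℤ)-1)) ×ˢ (Finset.Icc (1-(⌊X⌋₊:ℤ)) ((⌊X⌋₊:ℤ)-1)),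
        minKernel X (6*α*(u.1:ℝ)*(u.2:ℝ))
      ≤ 8 * ∑ v₁ ∈ Finset.Icc 1 ⌊2*X⌋₊, ∑ v₂ ∈ Finset.Icc 1 ⌊2*X⌋₊,
          minKernel X (6*α*(v₁:ℝ)*(v₂:ℝ)) := by
  classical
  set N := ⌊X⌋₊ with hNdef
  set M := ⌊2*X⌋₊ with hMdef
  set U : Finset ℤ := Finset.Icc (1-(N:ℤ)) ((N:ℤ)-1) with hU
  set T : Finset (ℕ×ℕ) := Finset.Icc 1 M ×ˢ Finset.Icc 1 M with hT
  set R : ℝ := ∑ v₁ ∈ Finset.Icc 1 M, ∑ v₂ ∈ Finset.Icc 1 M, minKernel X (6*α*(v₁:ℝ)*(v₂:ℝ)) with hR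
  have hX0 : (0:ℝ) ≤ X := by linarith
  have hNX : (N:ℝ) ≤ X := Nat.floor_le hX0
  have hXM : X ≤ (M:ℝ) := by
    have h1 : 2*X - 1 < (M:ℝ) := Nat.sub_one_lt_floor (2*X)
    linarith
  have hNM : N ≤ M := Nat.floor_le_floor (by linarith)
  have hN1 : 1 ≤ N := (Nat.one_le_floor_iff X).mpr hX
  have hMR : (M:ℝ) * (M:ℝ) ≤ R := by
    have : (M:ℝ) * (M:ℝ) = ∑ _v₁ ∈ Finset.Icc 1 M, ∑ _v₂ ∈ Finset.Icc 1 M, (1:ℝ) := by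
      simp [Nat.card_Icc]
    rw [this, hR]
    refine Finset.sum_le_sum fun v₁ _ => Finset.sum_le_sum fun v₂ _ => ?_
    exact minKernel_one_le X _ hX
  have hR0 : 0 ≤ R := by nlinarith [hXM]
  rw [← Finset.sum_filter_add_sum_filter_not (U ×ˢ U) (fun u => u.1 = 0 ∨ u.2 = 0)]
  have partA : ∑ u ∈ (U ×ˢ U).filter (fun u => u.1 = 0 ∨ u.2 = 0),
      minKernel X (6*α*(u.1:ℝ)*(u.2:ℝ)) ≤ 4 * R := by
    have hcard : ((U ×ˢ U).filter (fun u => u.1 = 0 ∨ u.2 = 0)).card ≤ 4 * N := by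
      have hsub : (U ×ˢ U).filter (fun u => u.1 = 0 ∨ u.2 = 0)
          ⊆ ({(0:ℤ)} ×ˢ U) ∪ (U ×ˢ ({(0:ℤ)} : Finset ℤ)) := by
        rintro ⟨a, b⟩ h
        simp only [Finset.mem_filter, Finset.mem_product, Finset.mem_union,
          Finset.mem_singleton] at *
        tauto
      have hUcard : U.card ≤ 2 * N := by
        rw [hU, Int.card_Icc]
        omega
      calc ((U ×ˢ U).filter (fun u => u.1 = 0 ∨ u.2 = 0)).card
          ≤ (({(0:ℤ)} ×ˢ U) ∪ (U ×ˢ ({(0:ℤ)} : Finset ℤ))).card := Finset.card_le_card hsub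
        _ ≤ (({(0:ℤ)} ×ˢ U)).card + ((U ×ˢ ({(0:ℤ)} : Finset ℤ))).card := Finset.card_union_le _ _
        _ = U.card + U.card := by simp [Finset.card_product]
        _ ≤ 4 * N := by omega
    calc ∑ u ∈ (U ×ˢ U).filter (fun u => u.1 = 0 ∨ u.2 = 0),
          minKernel X (6*α*(u.1:ℝ)*(u.2:ℝ))
        ≤ ∑ _u ∈ (U ×ˢ U).filter (fun u => u.1 = 0 ∨ u.2 = 0), X :=
          Finset.sum_le_sum fun u _ => minKernel_le X _
      _ = (((U ×ˢ U).filter (fun u => u.1 = 0 ∨ u.2 = 0)).card : ℝ) * X := by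
          rw [Finset.sum_const, nsmul_eq_mul]
      _ ≤ (4 * N : ℝ) * X := by
          apply mul_le_mul_of_nonneg_right _ hX0
          exact_mod_cast hcard
      _ ≤ 4 * ((M:ℝ) * (M:ℝ)) := by nlinarith
      _ ≤ 4 * R := by linarith
  have partB : ∑ u ∈ (U ×ˢ U).filter (fun u => ¬(u.1 = 0 ∨ u.2 = 0)),
      minKernel X (6*α*(u.1:ℝ)*(u.2:ℝ)) ≤ 4 * R := by
    set s := (U ×ˢ U).filter (fun u => ¬(u.1 = 0 ∨ u.2 = 0)) with hs
    set ψ : ℤ×ℤ → ℕ×ℕ := fun u => (u.1.natAbs, u.2.natAbs) with hψ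
    have hmaps : ∀ u ∈ s, ψ u ∈ T := by
      rintro ⟨a, b⟩ h
      simp only [hs, Finset.mem_filter, Finset.mem_product, hU, Finset.mem_Icc] at h
      simp only [hψ, hT, Finset.mem_product, Finset.mem_Icc]
      omega
    have hval : ∀ u : ℤ×ℤ, minKernel X (6*α*(u.1:ℝ)*(u.2:ℝ))
        = minKernel X (6*α*(((ψ u).1:ℕ):ℝ)*(((ψ u).2:ℕ):ℝ)) := fun u =>
      minKernel_int_abs X α u.1 u.2
    calc ∑ u ∈ s, minKernel X (6*α*(u.1:ℝ)*(u.2:ℝ))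
        = ∑ u ∈ s, minKernel X (6*α*(((ψ u).1:ℕ):ℝ)*(((ψ u).2:ℕ):ℝ)) :=
          Finset.sum_congr rfl fun u _ => hval u
      _ = ∑ v ∈ T, ∑ u ∈ s.filter (fun u => ψ u = v),
            minKernel X (6*α*(((ψ u).1:ℕ):ℝ)*(((ψ u).2:ℕ):ℝ)) :=
          (Finset.sum_fiberwise_of_maps_to hmaps _).symm
      _ ≤ ∑ v ∈ T, 4 * minKernel X (6*α*((v.1:ℕ):ℝ)*((v.2:ℕ):ℝ)) := by
          refine Finset.sum_le_sum fun v _ => ?_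
          have heq : ∑ u ∈ s.filter (fun u => ψ u = v),
              minKernel X (6*α*(((ψ u).1:ℕ):ℝ)*(((ψ u).2:ℕ):ℝ))
              = ((s.filter (fun u => ψ u = v)).card : ℝ)
                  * minKernel X (6*α*((v.1:ℕ):ℝ)*((v.2:ℕ):ℝ)) := by
            rw [Finset.sum_congr rfl (fun u hu => by
              rw [(Finset.mem_filter.mp hu).2]), Finset.sum_const, nsmul_eq_mul]
          rw [heq]
          have hc4 : (s.filter (fun u => ψ u = v)).card ≤ 4 := by
            have hsub : s.filter (fun u => ψ u = v)
                ⊆ {((v.1:ℤ), (v.2:ℤ)), (-(v.1:ℤ), (v.2:ℤ)),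
                   ((v.1:ℤ), -(v.2:ℤ)), (-(v.1:ℤ), -(v.2:ℤ))} := by
              rintro ⟨a, b⟩ h
              rw [Finset.mem_filter] at h
              obtain ⟨-, hv⟩ := h
              subst hv
              simp only [Finset.mem_insert, Finset.mem_singleton, Prod.mk.injEq, hψ]
              rcases Int.natAbs_eq a with ha|ha <;> rcases Int.natAbs_eq b with hb|hb <;> tauto
            calc (s.filter (fun u => ψ u = v)).card
                ≤ _ := Finset.card_le_card hsub
              _ ≤ 4 := by
                  apply le_trans (Finset.card_insert_le _ _)
                  apply Nat.succ_le_succ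
                  apply le_trans (Finset.card_insert_le _ _)
                  apply Nat.succ_le_succ
                  apply le_trans (Finset.card_insert_le _ _)
                  simp
          have hmk0 : 0 ≤ minKernel X (6*α*((v.1:ℕ):ℝ)*((v.2:ℕ):ℝ)) :=
            minKernel_nonneg X _ hX0
          apply mul_le_mul_of_nonneg_right _ hmk0
          exact_mod_cast hc4
      _ = 4 * R := by
          rw [← Finset.mul_sum]
          congr 1
          rw [hR, hT, Finset.sum_product]
  linarith

/-- ∫₀¹ |g(α,β)|⁴ dβ ≪ Σ_{1 ≤ u₁,u₂ ≤ 2X} min{X, ‖6αu₁u₂‖⁻¹}. -/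
theorem fourth_moment_beta_divisor_bound :
    ∃ C : ℝ, 0 < C ∧ ∀ X α : ℝ, 1 ≤ X →
      (∫ β in (0:ℝ)..1, ‖g α β X‖ ^ 4) ≤
        C * ∑ u₁ ∈ Finset.Icc 1 ⌊2 * X⌋₊, ∑ u₂ ∈ Finset.Icc 1 ⌊2 * X⌋₊,
          minKernel X (6 * α * (u₁ : ℝ) * (u₂ : ℝ)) := by
  classical
  refine ⟨8, by norm_num, fun X α hX => ?_⟩
  set N := ⌊X⌋₊ with hNdef
  set U : Finset ℤ := Finset.Icc (1-(N:ℤ)) ((N:ℤ)-1) with hU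
  set D : Finset (ℕ×ℕ×ℕ×ℕ) :=
    Finset.Icc 1 N ×ˢ Finset.Icc 1 N ×ˢ Finset.Icc 1 N ×ˢ Finset.Icc 1 N with hD
  set S : ℂ := ∑ x ∈ D, term α x with hS
  have hint : (∫ β in (0:ℝ)..1, ‖g α β X‖ ^ 4) = S.re := by
    have := step1 α X
    rw [hS, hD, ← this, Complex.ofReal_re]
  have hmaps : ∀ x ∈ D, phi x ∈ U ×ˢ U := by
    rintro ⟨x₁, x₂, x₃, x₄⟩ hx
    simp only [hD, Finset.mem_product, Finset.mem_Icc] at hx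
    simp only [hU, Finset.mem_product, Finset.mem_Icc, phi]
    omega
  have hfib : S = ∑ u ∈ U ×ˢ U, ∑ x ∈ D.filter (fun x => phi x = u), term α x :=
    (Finset.sum_fiberwise_of_maps_to hmaps _).symm
  have hnorm : ‖S‖ ≤ ∑ u ∈ U ×ˢ U, minKernel X (6 * α * (u.1:ℝ) * (u.2:ℝ)) := by
    rw [hfib]
    refine le_trans (norm_sum_le _ _) (Finset.sum_le_sum fun u _ => ?_)
    have := fiber_bound α X hX u.1 u.2
    simpa using this
  have hcount := counting α X hX
  calc (∫ β in (0:ℝ)..1, ‖g α β X‖ ^ 4) = S.re := hint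
    _ ≤ ‖S‖ := Complex.re_le_norm S
    _ ≤ ∑ u ∈ U ×ˢ U, minKernel X (6 * α * (u.1:ℝ) * (u.2:ℝ)) := hnorm
    _ ≤ 8 * ∑ u₁ ∈ Finset.Icc 1 ⌊2 * X⌋₊, ∑ u₂ ∈ Finset.Icc 1 ⌊2 * X⌋₊,
          minKernel X (6 * α * (u₁ : ℝ) * (u₂ : ℝ)) := hcount
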